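/- Spectral gap of the Grover interpolating Hamiltonian: The operator H(s) := (1−s)H₀ + sH₁ on ℂ^{2ⁿ} has a nondegenerate smallest eigenvalue for every s ∈ [0,1], and the difference between the second-smallest and the smallest eigenvalue of H(s) equals g(s) = √( 2^{−n} + 4(1 − 2^{−n})(s − 1/2)² ). In particular g(0) = g(1) = 1 and min over s ∈ [0,1] of g(s) = 2^{−n/2}. -/

import Mathlib

open scoped InnerProductSpace

section Conc
variable (n : ℕ)

lemma inner_single_sum (i : Fin (2^n)) :
    ⟪EuclideanSpace.single i (1:ℂ), ∑ w, EuclideanSpace.single w (1:ℂ)⟫_ℂ = 1 := by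
  rw [inner_sum]
  rw [Finset.sum_eq_single i]
  · rw [EuclideanSpace.inner_single_left]
    simp [EuclideanSpace.single_apply]
  · intro b _ hb
    rw [EuclideanSpace.inner_single_left]
    simp [EuclideanSpace.single_apply, Ne.symm hb]
  · simp

lemma inner_sum_single' (i : Fin (2^n)) :
    ⟪∑ w, EuclideanSpace.single w (1:ℂ), EuclideanSpace.single i (1:ℂ)⟫_ℂ = 1 := by
  rw [sum_inner]
  rw [Finset.sum_eq_single i]
  · rw [EuclideanSpace.inner_single_left]
    simp [EuclideanSpace.single_apply]
  · intro b _ hb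
    rw [EuclideanSpace.inner_single_left]
    simp [EuclideanSpace.single_apply, hb]
  · simp

lemma inner_sumsum : ⟪∑ w : Fin (2^n), EuclideanSpace.single w (1:ℂ), ∑ w : Fin (2^n), EuclideanSpace.single w (1:ℂ)⟫_ℂ
    = (2^n : ℂ) := by
  rw [inner_sum]
  simp [inner_sum_single' n]

end Conc

open scoped InnerProductSpace

section Core
variable {V : Type*} [NormedAddCommGroup V] [InnerProductSpace ℂ V]

/-- Linear independence from inner products. -/
lemma grover_indep (ψ e : V) (c : ℝ) (hc1 : c < 1) (hc0 : 0 < c)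
    (hψψ : ⟪ψ, ψ⟫_ℂ = 1) (hψe : ⟪ψ, e⟫_ℂ = (c:ℂ)) (heψ : ⟪e, ψ⟫_ℂ = (c:ℂ)) (hee : ⟪e, e⟫_ℂ = 1)
    (a b : ℂ) (h : a • ψ + b • e = 0) : a = 0 ∧ b = 0 := by
  have h1 : a + b * c = 0 := by
    have := congrArg (fun y => ⟪ψ, y⟫_ℂ) h
    simp only [inner_add_right, inner_smul_right, hψψ, hψe, inner_zero_right] at this
    simpa [mul_comm] using this
  have h2 : a * c + b = 0 := by
    have := congrArg (fun y => ⟪e, y⟫_ℂ) h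
    simp only [inner_add_right, inner_smul_right, heψ, hee, inner_zero_right] at this
    simpa [mul_comm] using this
  have hcc : (c:ℂ)^2 ≠ 1 := by
    intro hcon
    have : (c:ℝ)^2 = 1 := by exact_mod_cast hcon
    nlinarith
  have ha : a = 0 := by
    have key : a * (1 - (c:ℂ)^2) = 0 := by linear_combination h1 - (c:ℂ) * h2
    rcases mul_eq_zero.1 key with h | h
    · exact h
    · exact absurd (by linear_combination -h) hcc
  refine ⟨ha, ?_⟩
  have := h2
  rw [ha] at this; simpa using this
end Core

section Core2
variable {V : Type*} [NormedAddCommGroup V] [InnerProductSpace ℂ V]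

/-- Action of f on a combination a•ψ + b•e. -/
lemma grover_eigvec (ψ e : V) (c s : ℝ)
    (hψψ : ⟪ψ, ψ⟫_ℂ = 1) (hψe : ⟪ψ, e⟫_ℂ = (c:ℂ)) (heψ : ⟪e, ψ⟫_ℂ = (c:ℂ)) (hee : ⟪e, e⟫_ℂ = 1)
    (f : V →ₗ[ℂ] V)
    (hf : ∀ x, f x = x - ((1-s : ℝ) : ℂ) • (⟪ψ, x⟫_ℂ • ψ) - ((s : ℝ) : ℂ) • (⟪e, x⟫_ℂ • e))
    (μ a b : ℝ)
    (h1 : (1-s)*a + (1-s)*c*b = (1-μ)*a)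
    (h2 : s*c*a + s*b = (1-μ)*b) :
    f ((a:ℂ) • ψ + (b:ℂ) • e) = (μ:ℂ) • ((a:ℂ) • ψ + (b:ℂ) • e) := by
  rw [hf]
  have hip1 : ⟪ψ, (a:ℂ) • ψ + (b:ℂ) • e⟫_ℂ = (a:ℂ) + (b:ℂ)*(c:ℂ) := by
    rw [inner_add_right, inner_smul_right, inner_smul_right, hψψ, hψe]; ring
  have hip2 : ⟪e, (a:ℂ) • ψ + (b:ℂ) • e⟫_ℂ = (a:ℂ)*(c:ℂ) + (b:ℂ) := by
    rw [inner_add_right, inner_smul_right, inner_smul_right, heψ, hee]; ring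
  rw [hip1, hip2]
  have c1 : ((a:ℂ) - ((1-s:ℝ):ℂ) * ((a:ℂ) + (b:ℂ)*(c:ℂ))) = (μ:ℂ) * (a:ℂ) := by
    have h1' : ((1-s:ℝ):ℂ)*(a:ℂ) + ((1-s:ℝ):ℂ)*(c:ℂ)*(b:ℂ) = ((1-μ:ℝ):ℂ)*(a:ℂ) := by
      exact_mod_cast congrArg (Complex.ofReal) h1
    push_cast at h1' ⊢
    linear_combination -h1'
  have c2 : ((b:ℂ) - ((s:ℝ):ℂ) * ((a:ℂ)*(c:ℂ) + (b:ℂ))) = (μ:ℂ) * (b:ℂ) := by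
    have h2' : ((s:ℝ):ℂ)*(c:ℂ)*(a:ℂ) + ((s:ℝ):ℂ)*(b:ℂ) = ((1-μ:ℝ):ℂ)*(b:ℂ) := by
      exact_mod_cast congrArg (Complex.ofReal) h2
    push_cast at h2' ⊢
    linear_combination -h2'
  rw [smul_smul, smul_smul, smul_add, smul_smul, smul_smul]
  rw [show ((a:ℂ) • ψ + (b:ℂ) • e) - (((1-s:ℝ):ℂ) * ((a:ℂ) + (b:ℂ)*(c:ℂ))) • ψ
        - (((s:ℝ):ℂ) * ((a:ℂ)*(c:ℂ) + (b:ℂ))) • e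
      = ((a:ℂ) - ((1-s:ℝ):ℂ) * ((a:ℂ) + (b:ℂ)*(c:ℂ))) • ψ
        + ((b:ℂ) - ((s:ℝ):ℂ) * ((a:ℂ)*(c:ℂ) + (b:ℂ))) • e by module]
  rw [c1, c2]
end Core2

section Core3
variable {V : Type*} [NormedAddCommGroup V] [InnerProductSpace ℂ V]

lemma grover_core (ψ e : V) (c : ℝ) (hc0 : 0 < c) (hc1 : c < 1)
    (hψψ : ⟪ψ, ψ⟫_ℂ = 1) (hψe : ⟪ψ, e⟫_ℂ = (c:ℂ)) (heψ : ⟪e, ψ⟫_ℂ = (c:ℂ)) (hee : ⟪e, e⟫_ℂ = 1)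
    (s : ℝ) (hs0 : 0 ≤ s) (hs1 : s ≤ 1)
    (f : V →ₗ[ℂ] V)
    (hf : ∀ x, f x = x - ((1-s : ℝ) : ℂ) • (⟪ψ, x⟫_ℂ • ψ) - ((s : ℝ) : ℂ) • (⟪e, x⟫_ℂ • e)) :
    ∃ E₀ : ℝ, Module.End.HasEigenvalue f (E₀ : ℂ) ∧
      Module.finrank ℂ (Module.End.eigenspace f (E₀ : ℂ)) = 1 ∧
      Module.End.HasEigenvalue f ((E₀ + Real.sqrt (c^2 + 4*(1-c^2)*(s-1/2)^2) : ℝ) : ℂ) ∧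
      ∀ μ : ℝ, Module.End.HasEigenvalue f ((μ:ℝ):ℂ) →
        μ = E₀ ∨ E₀ + Real.sqrt (c^2 + 4*(1-c^2)*(s-1/2)^2) ≤ μ := by
  set g : ℝ := Real.sqrt (c^2 + 4*(1-c^2)*(s-1/2)^2) with hgdef
  have h1c2 : 0 ≤ 1 - c^2 := by nlinarith
  have hsq : (0:ℝ) ≤ (s-1/2)^2 := sq_nonneg _
  have hinpos : 0 < c^2 + 4*(1-c^2)*(s-1/2)^2 := by
    nlinarith [mul_nonneg h1c2 hsq, pow_pos hc0 2]
  have hin_nonneg : 0 ≤ c^2 + 4*(1-c^2)*(s-1/2)^2 := hinpos.le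
  have hg2 : g^2 = c^2 + 4*(1-c^2)*(s-1/2)^2 := Real.sq_sqrt hin_nonneg
  have hgnn : 0 ≤ g := Real.sqrt_nonneg _
  have hgpos : 0 < g := Real.sqrt_pos.mpr hinpos
  have hgle1 : g ≤ 1 := by
    have hle : c^2 + 4*(1-c^2)*(s-1/2)^2 ≤ 1 := by
      nlinarith [mul_nonneg h1c2 (mul_nonneg hs0 (by linarith : (0:ℝ) ≤ 1 - s))]
    calc g ≤ Real.sqrt 1 := Real.sqrt_le_sqrt hle
    _ = 1 := Real.sqrt_one
  set E₀ : ℝ := (1 - g)/2 with hE₀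
  set lam : ℝ := (1 + g)/2 with hlam
  have hlamhalf : (1:ℝ)/2 ≤ lam := by rw [hlam]; linarith
  have hq : lam^2 - lam + s*(1-s)*(1-c^2) = 0 := by
    rw [hlam]; linear_combination hg2/4
  -- indep helper
  have indep : ∀ a b : ℂ, a • ψ + b • e = 0 → a = 0 ∧ b = 0 :=
    grover_indep ψ e c hc1 hc0 hψψ hψe heψ hee
  -- ground state eigenvector
  set a₀ : ℝ := (1-s)*c with ha₀
  set b₀ : ℝ := lam - (1-s) with hb₀
  have hab₀ : ¬ ((a₀:ℂ) = 0 ∧ (b₀:ℂ) = 0) := by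
    rintro ⟨ha, hb⟩
    have ha' : a₀ = 0 := by exact_mod_cast ha
    have hb' : b₀ = 0 := by exact_mod_cast hb
    rw [hb₀] at hb'
    have h1s : 1 - s = lam := by linarith
    have : (1-s)*c > 0 := mul_pos (by linarith) hc0
    rw [ha₀] at ha'; linarith
  have heq1 : (1-s)*a₀ + (1-s)*c*b₀ = (1-E₀)*a₀ := by
    rw [ha₀, hb₀, hE₀, hlam]; ring
  have heq2 : s*c*a₀ + s*b₀ = (1-E₀)*b₀ := by
    rw [hlam] at hq; rw [ha₀, hb₀, hE₀, hlam]; linear_combination -hq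
  set v₀ : V := (a₀:ℂ) • ψ + (b₀:ℂ) • e with hv₀
  have hv₀ne : v₀ ≠ 0 := fun h => hab₀ (indep _ _ h)
  have hfv₀ : f v₀ = ((E₀:ℝ):ℂ) • v₀ :=
    grover_eigvec ψ e c s hψψ hψe heψ hee f hf E₀ a₀ b₀ heq1 heq2
  have hmem₀ : v₀ ∈ Module.End.eigenspace f ((E₀:ℝ):ℂ) :=
    Module.End.mem_eigenspace_iff.2 hfv₀
  have heig₀ : Module.End.HasEigenvalue f ((E₀:ℝ):ℂ) :=
    Module.End.hasEigenvalue_of_hasEigenvector ⟨hmem₀, hv₀ne⟩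
  refine ⟨E₀, heig₀, ?_, ?_, ?_⟩
  · -- finrank = 1
    have hcne : ((c:ℝ):ℂ) ≠ 0 := by exact_mod_cast hc0.ne'
    have hlamne : ((lam:ℝ):ℂ) ≠ 0 := by
      have h0 : (0:ℝ) < lam := by linarith
      exact_mod_cast h0.ne'
    have hlamc : ((lam:ℝ):ℂ) = 1 - ((E₀:ℝ):ℂ) := by rw [hlam, hE₀]; push_cast; ring
    have ha₀c : (a₀:ℂ) = (1-(s:ℂ))*(c:ℂ) := by rw [ha₀]; push_cast; ring
    have hb₀c : (b₀:ℂ) = ((lam:ℝ):ℂ) - (1-(s:ℂ)) := by rw [hb₀]; push_cast; ring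
    have hspan : Module.End.eigenspace f ((E₀:ℝ):ℂ) = Submodule.span ℂ {v₀} := by
      apply le_antisymm
      · intro x hx
        have hfx : f x = ((E₀:ℝ):ℂ) • x := Module.End.mem_eigenspace_iff.1 hx
        set α : ℂ := ⟪ψ, x⟫_ℂ with hα
        set β : ℂ := ⟪e, x⟫_ℂ with hβ
        have hvec : x - ((1-s:ℝ):ℂ) • (α • ψ) - ((s:ℝ):ℂ) • (β • e) = ((E₀:ℝ):ℂ) • x := by
          rw [← hfx, hf]
        have key : ((lam:ℝ):ℂ) • x = ((1-(s:ℂ)) * α) • ψ + ((s:ℂ) * β) • e := by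
          rw [hlamc, sub_smul, one_smul, ← hvec]
          push_cast
          module
        set A : ℂ := ((lam:ℝ):ℂ)⁻¹ * ((1-(s:ℂ)) * α) with hA
        set B : ℂ := ((lam:ℝ):ℂ)⁻¹ * ((s:ℂ) * β) with hB
        have hx2 : x = A • ψ + B • e := by
          rw [hA, hB]
          calc x = ((lam:ℝ):ℂ)⁻¹ • (((lam:ℝ):ℂ) • x) := (inv_smul_smul₀ hlamne x).symm
          _ = _ := by rw [key, smul_add, smul_smul, smul_smul]
        have hαAB : α = A + B * (c:ℂ) := by
          rw [hα, hx2, inner_add_right, inner_smul_right, inner_smul_right, hψψ, hψe]; ring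
        have hβAB : β = A * (c:ℂ) + B := by
          rw [hβ, hx2, inner_add_right, inner_smul_right, inner_smul_right, heψ, hee]; ring
        have EA : ((lam:ℝ):ℂ) * A = (1-(s:ℂ)) * (A + B*(c:ℂ)) := by
          rw [← hαAB, hA, ← mul_assoc, mul_inv_cancel₀ hlamne, one_mul]
        have EB : ((lam:ℝ):ℂ) * B = (s:ℂ) * (A*(c:ℂ) + B) := by
          rw [← hβAB, hB, ← mul_assoc, mul_inv_cancel₀ hlamne, one_mul]
        by_cases hls : lam = 1 - s
        · -- degenerate direction: lam = 1 - s
          have h1sc : (1 - (s:ℂ)) = ((lam:ℝ):ℂ) := by rw [hls]; push_cast; ring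
          have hB0 : B = 0 := by
            rw [h1sc] at EA
            have hz : ((lam:ℝ):ℂ) * (B * (c:ℂ)) = 0 := by linear_combination -EA
            rcases mul_eq_zero.1 hz with h | h
            · exact absurd h hlamne
            · rcases mul_eq_zero.1 h with h' | h'
              · exact h'
              · exact absurd h' hcne
          have hsA : (s:ℂ) * (A * (c:ℂ)) = 0 := by
            rw [hB0] at EB; linear_combination -EB
          by_cases hs0' : s = 0
          · subst hs0'
            have hb₀0 : (b₀:ℂ) = 0 := by
              rw [hb₀c, ← h1sc]; push_cast; ring
            refine Submodule.mem_span_singleton.2 ⟨A / (c:ℂ), ?_⟩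
            have hAc : (A/(c:ℂ))*((a₀:ℝ):ℂ) = A := by
              rw [ha₀c]; push_cast; field_simp; simp
            rw [hv₀, hx2, hB0, hb₀0, smul_add, smul_smul, smul_smul, hAc, mul_zero]
          · have hsc : ((s:ℝ):ℂ) ≠ 0 := by exact_mod_cast hs0'
            have hA0 : A = 0 := by
              rcases mul_eq_zero.1 hsA with h | h
              · exact absurd h hsc
              · rcases mul_eq_zero.1 h with h' | h'
                · exact h'
                · exact absurd h' hcne
            have : x = 0 := by rw [hx2, hA0, hB0]; simp
            rw [this]; exact Submodule.zero_mem _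
        · -- generic: lam ≠ 1 - s
          have hb₀ne : (b₀:ℂ) ≠ 0 := by
            rw [hb₀]
            exact_mod_cast sub_ne_zero.2 hls
          refine Submodule.mem_span_singleton.2 ⟨B / (b₀:ℂ), ?_⟩
          have h2 : (B/(b₀:ℂ))*(b₀:ℂ) = B := div_mul_cancel₀ B hb₀ne
          have h1 : (B/(b₀:ℂ))*(a₀:ℂ) = A := by
            rw [div_mul_eq_mul_div, div_eq_iff hb₀ne, ha₀c, hb₀c]
            linear_combination -EA
          rw [hv₀, hx2, smul_add, smul_smul, smul_smul, h1, h2]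
      · rw [Submodule.span_le, Set.singleton_subset_iff]
        exact hmem₀
    rw [hspan]
    exact finrank_span_singleton hv₀ne
  · -- excited state
    have hq' : ((1-g)/2)^2 - ((1-g)/2) + s*(1-s)*(1-c^2) = 0 := by
      linear_combination hg2/4
    rcases lt_or_eq_of_le hs1 with hlt | hseq
    · -- s < 1
      set a₁ : ℝ := (1-s)*c with ha₁
      set b₁ : ℝ := (1-g)/2 - (1-s) with hb₁
      have e1 : (1-s)*a₁ + (1-s)*c*b₁ = (1-(E₀+g))*a₁ := by
        rw [ha₁, hb₁, hE₀]; ring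
      have e2 : s*c*a₁ + s*b₁ = (1-(E₀+g))*b₁ := by
        rw [ha₁, hb₁, hE₀]; linear_combination -hq'
      have hane : (a₁:ℂ) ≠ 0 := by
        rw [ha₁]
        exact_mod_cast (mul_pos (by linarith : (0:ℝ) < 1-s) hc0).ne'
      have hvne : (a₁:ℂ) • ψ + (b₁:ℂ) • e ≠ 0 := fun h => hane (indep _ _ h).1
      exact Module.End.hasEigenvalue_of_hasEigenvector
        ⟨Module.End.mem_eigenspace_iff.2
          (grover_eigvec ψ e c s hψψ hψe heψ hee f hf (E₀+g) a₁ b₁ e1 e2), hvne⟩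
    · -- s = 1
      subst hseq
      set a₁ : ℝ := (1-g)/2 - 1 with ha₁
      set b₁ : ℝ := c with hb₁
      have e1 : (1-1)*a₁ + (1-1)*c*b₁ = (1-(E₀+g))*a₁ := by
        rw [ha₁, hE₀]; linear_combination -hq'
      have e2 : 1*c*a₁ + 1*b₁ = (1-(E₀+g))*b₁ := by
        rw [ha₁, hb₁, hE₀]; ring
      have hbne : (b₁:ℂ) ≠ 0 := by rw [hb₁]; exact_mod_cast hc0.ne'
      have hvne : (a₁:ℂ) • ψ + (b₁:ℂ) • e ≠ 0 := fun h => hbne (indep _ _ h).2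
      exact Module.End.hasEigenvalue_of_hasEigenvector
        ⟨Module.End.mem_eigenspace_iff.2
          (grover_eigvec ψ e c 1 hψψ hψe heψ hee f hf (E₀+g) a₁ b₁ e1 e2), hvne⟩
  · -- completeness
    intro μ hμ
    by_cases hge : E₀ + g ≤ μ
    · exact Or.inr hge
    left
    have hμlt : μ < E₀ + g := lt_of_not_ge hge
    have hμlt1 : μ < 1 := by rw [hE₀] at hμlt; linarith
    have hμne1 : ((1:ℂ) - (μ:ℝ)) ≠ 0 := by
      intro h
      have : ((1-μ:ℝ):ℂ) = 0 := by push_cast; linear_combination h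
      have : (1-μ:ℝ) = 0 := by exact_mod_cast this
      linarith
    obtain ⟨x, hxmem, hxne⟩ := hμ.exists_hasEigenvector
    have hfx : f x = ((μ:ℝ):ℂ) • x := Module.End.mem_eigenspace_iff.1 hxmem
    set α : ℂ := ⟪ψ, x⟫_ℂ with hα
    set β : ℂ := ⟪e, x⟫_ℂ with hβ
    have hvec : x - ((1-s : ℝ) : ℂ) • (α • ψ) - ((s : ℝ) : ℂ) • (β • e) = ((μ:ℝ):ℂ) • x := by
      rw [← hfx, hf]
    have hαβ : ¬ (α = 0 ∧ β = 0) := by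
      rintro ⟨h1, h2⟩
      rw [h1, h2] at hvec
      simp only [smul_zero, zero_smul, sub_zero] at hvec
      apply hxne
      have : ((1:ℂ) - (μ:ℝ)) • x = 0 := by
        rw [sub_smul, one_smul, ← hvec, sub_self]
      exact (smul_eq_zero.1 this).resolve_left hμne1
    -- inner products with ψ and e
    have E1 : α - (1 - (s:ℂ)) * α - (s:ℂ) * ((c:ℂ) * β) = (μ:ℂ) * α := by
      have h := congrArg (fun y => ⟪ψ, y⟫_ℂ) hvec
      simp only [inner_sub_right, inner_smul_right, hψψ, hψe, inner_smul_right] at h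
      push_cast at h
      linear_combination h
    have E2 : β - (1 - (s:ℂ)) * ((c:ℂ) * α) - (s:ℂ) * β = (μ:ℂ) * β := by
      have h := congrArg (fun y => ⟪e, y⟫_ℂ) hvec
      simp only [inner_sub_right, inner_smul_right, heψ, hee, inner_smul_right] at h
      push_cast at h
      linear_combination h
    set d : ℝ := (μ-s)*(μ-(1-s)) - s*(1-s)*c^2 with hd
    have hdα : (d:ℂ) * α = 0 := by
      rw [hd]; push_cast
      linear_combination ((1 - (s:ℂ)) - (μ:ℂ)) * E1 + (s:ℂ)*(c:ℂ) * E2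
    have hdβ : (d:ℂ) * β = 0 := by
      rw [hd]; push_cast
      linear_combination ((1 - (s:ℂ))*(c:ℂ)) * E1 + ((s:ℂ) - (μ:ℂ)) * E2
    have hd0 : d = 0 := by
      rcases not_and_or.1 hαβ with h | h
      · have : (d:ℂ) = 0 := by
          rcases mul_eq_zero.1 hdα with h' | h'
          · exact h'
          · exact absurd h' h
        exact_mod_cast this
      · have : (d:ℂ) = 0 := by
          rcases mul_eq_zero.1 hdβ with h' | h'
          · exact h'
          · exact absurd h' h
        exact_mod_cast this
    rw [hd] at hd0
    -- (2μ-1)^2 = g^2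
    have hfact : (2*μ - 1 - g)*(2*μ - 1 + g) = 0 := by
      linear_combination 4*hd0 - hg2
    rcases mul_eq_zero.1 hfact with h | h
    · exfalso; rw [hE₀] at hμlt; linarith
    · rw [hE₀]; linarith

end Core3


/-- **Spectral gap of the Grover interpolating Hamiltonian.**

On `ℂ^{2ⁿ}` let `H₀ = 1 − |0̂⟩⟨0̂|` (with `|0̂⟩` the normalized uniform superposition) and
`H₁ = 1 − |e_u⟩⟨e_u|` for a fixed basis element `u`, and `H(s) = (1−s)H₀ + sH₁`.
Then for every `s ∈ [0,1]` the smallest eigenvalue `E₀` of `H(s)` is nondegenerate, and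
the difference between the second-smallest and the smallest eigenvalue equals
`g(s) = √(2⁻ⁿ + 4(1 − 2⁻ⁿ)(s − 1/2)²)`; moreover `g(0) = g(1) = 1` and
`min_{s ∈ [0,1]} g(s) = 2^{−n/2}`. -/
theorem grover_hamiltonian_gap (n : ℕ) (hn : 1 ≤ n) (u : Fin (2 ^ n)) :
    let V := EuclideanSpace ℂ (Fin (2 ^ n))
    let ψ0 : V := ((Real.sqrt (2 ^ n) : ℂ))⁻¹ • ∑ w, EuclideanSpace.single w (1:ℂ)
    let H0 : V →L[ℂ] V := 1 - (innerSL ℂ ψ0).smulRight ψ0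
    let H1 : V →L[ℂ] V :=
      1 - (innerSL ℂ (EuclideanSpace.single u (1:ℂ))).smulRight (EuclideanSpace.single u (1:ℂ))
    let Hop : ℝ → V →L[ℂ] V := fun s => (1 - s) • H0 + s • H1
    let gfun : ℝ → ℝ := fun s =>
      Real.sqrt ((2:ℝ) ^ (-(n:ℝ)) + 4 * (1 - (2:ℝ) ^ (-(n:ℝ))) * (s - 1/2) ^ 2)
    (∀ s ∈ Set.Icc (0:ℝ) 1, ∃ E₀ : ℝ,
      Module.End.HasEigenvalue ((Hop s).toLinearMap) (E₀ : ℂ) ∧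
      Module.finrank ℂ (Module.End.eigenspace ((Hop s).toLinearMap) (E₀ : ℂ)) = 1 ∧
      Module.End.HasEigenvalue ((Hop s).toLinearMap) ((E₀ + gfun s : ℝ) : ℂ) ∧
      (∀ μ : ℝ, Module.End.HasEigenvalue ((Hop s).toLinearMap) ((μ : ℝ) : ℂ) →
        μ = E₀ ∨ E₀ + gfun s ≤ μ)) ∧
    gfun 0 = 1 ∧ gfun 1 = 1 ∧
    IsLeast (gfun '' Set.Icc (0:ℝ) 1) ((2:ℝ) ^ (-(n:ℝ) / 2)) := by
  intro V ψ0 H0 H1 Hop gfun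
  have hNpos : (0:ℝ) < 2^n := by positivity
  have hsqN : Real.sqrt ((2:ℝ)^n) ^ 2 = ((2:ℝ)^n) := Real.sq_sqrt hNpos.le
  have hsqpos : 0 < Real.sqrt ((2:ℝ)^n) := Real.sqrt_pos.2 hNpos
  set c : ℝ := (Real.sqrt ((2:ℝ)^n))⁻¹ with hc
  have hc0 : 0 < c := inv_pos.2 hsqpos
  have hc2 : c^2 = ((2:ℝ)^n)⁻¹ := by rw [hc, inv_pow, hsqN]
  have hc2' : c^2 = (2:ℝ)^(-(n:ℝ)) := by
    rw [hc2, Real.rpow_neg (by norm_num : (0:ℝ) ≤ 2), Real.rpow_natCast]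
  have hc1 : c < 1 := by
    have h2 : (2:ℝ) ≤ (2:ℝ)^n := by
      calc (2:ℝ) = 2^1 := (pow_one 2).symm
      _ ≤ 2^n := pow_le_pow_right₀ (by norm_num) hn
    have hgt : (1:ℝ) < Real.sqrt ((2:ℝ)^n) := by
      rw [show (1:ℝ) = Real.sqrt 1 from Real.sqrt_one.symm]
      exact Real.sqrt_lt_sqrt (by norm_num) (by linarith)
    rw [hc]
    exact inv_lt_one_of_one_lt₀ hgt
  set e : V := EuclideanSpace.single u (1:ℂ) with he
  have hrne : ((Real.sqrt ((2:ℝ)^n) : ℝ) : ℂ) ≠ 0 := by exact_mod_cast hsqpos.ne'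
  have hr2 : ((Real.sqrt ((2:ℝ)^n) : ℝ) : ℂ)^2 = (2:ℂ)^n := by
    exact_mod_cast hsqN
  have hcc : ((c:ℝ):ℂ) = (((Real.sqrt ((2:ℝ)^n) : ℝ):ℂ))⁻¹ := by
    rw [hc]; push_cast; ring
  have hψ0 : ψ0 = (((Real.sqrt ((2:ℝ)^n) : ℝ):ℂ))⁻¹ • ∑ w, EuclideanSpace.single w (1:ℂ) := by
    simp only [ψ0]
  have hψψ : ⟪ψ0, ψ0⟫_ℂ = 1 := by
    rw [hψ0, inner_smul_left, inner_smul_right, inner_sumsum, map_inv₀, Complex.conj_ofReal,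
      ← mul_assoc, ← mul_inv, ← sq, hr2]
    exact inv_mul_cancel₀ (pow_ne_zero _ two_ne_zero)
  have hψe : ⟪ψ0, e⟫_ℂ = ((c:ℝ):ℂ) := by
    rw [hψ0, he, inner_smul_left, inner_sum_single', map_inv₀, Complex.conj_ofReal, hcc, mul_one]
  have heψ : ⟪e, ψ0⟫_ℂ = ((c:ℝ):ℂ) := by
    rw [hψ0, he, inner_smul_right, inner_single_sum, hcc, mul_one]
  have hee : ⟪e, e⟫_ℂ = 1 := by
    rw [he, EuclideanSpace.inner_single_left]
    simp [EuclideanSpace.single_apply]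
  have hf : ∀ s : ℝ, ∀ x : V, ((Hop s).toLinearMap) x
      = x - ((1-s:ℝ):ℂ) • (⟪ψ0, x⟫_ℂ • ψ0) - ((s:ℝ):ℂ) • (⟪e, x⟫_ℂ • e) := by
    intro s x
    show (Hop s) x = _
    simp only [Hop, H0, H1, ← he]
    rw [ContinuousLinearMap.add_apply, ContinuousLinearMap.smul_apply,
      ContinuousLinearMap.smul_apply, ContinuousLinearMap.sub_apply,
      ContinuousLinearMap.sub_apply, ContinuousLinearMap.one_apply,
      ContinuousLinearMap.smulRight_apply, ContinuousLinearMap.smulRight_apply,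
      innerSL_apply_apply, innerSL_apply_apply, Complex.coe_smul, Complex.coe_smul]
    module
  have hgf : ∀ s : ℝ, gfun s = Real.sqrt (c^2 + 4*(1-c^2)*(s-1/2)^2) := by
    intro s
    simp only [gfun]
    rw [← hc2']
  refine ⟨?_, ?_, ?_, ?_⟩
  · intro s hs
    obtain ⟨E₀, h1, h2, h3, h4⟩ := grover_core ψ0 e c hc0 hc1 hψψ hψe heψ hee
      s hs.1 hs.2 ((Hop s).toLinearMap) (hf s)
    refine ⟨E₀, h1, h2, ?_, ?_⟩
    · rw [hgf s]; exact h3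
    · intro μ hμ
      rw [hgf s]
      exact h4 μ hμ
  · simp only [gfun]
    rw [show (2:ℝ)^(-(n:ℝ)) + 4*(1-(2:ℝ)^(-(n:ℝ)))*((0:ℝ)-1/2)^2 = 1 by ring]
    exact Real.sqrt_one
  · simp only [gfun]
    rw [show (2:ℝ)^(-(n:ℝ)) + 4*(1-(2:ℝ)^(-(n:ℝ)))*((1:ℝ)-1/2)^2 = 1 by ring]
    exact Real.sqrt_one
  · have hkey : (2:ℝ)^(-(n:ℝ)/2) = Real.sqrt ((2:ℝ)^(-(n:ℝ))) := by
      rw [Real.sqrt_eq_rpow, ← Real.rpow_mul (by norm_num : (0:ℝ) ≤ 2)]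
      congr 1
      ring
    constructor
    · refine ⟨1/2, ⟨by norm_num, by norm_num⟩, ?_⟩
      simp only [gfun]
      rw [show (2:ℝ)^(-(n:ℝ)) + 4*(1-(2:ℝ)^(-(n:ℝ)))*((1/2:ℝ)-1/2)^2 = (2:ℝ)^(-(n:ℝ)) by ring]
      rw [hkey]
    · rintro y ⟨s, hs, rfl⟩
      simp only [gfun]
      rw [hkey]
      apply Real.sqrt_le_sqrt
      have h2n1 : (2:ℝ)^(-(n:ℝ)) ≤ 1 :=
        Real.rpow_le_one_of_one_le_of_nonpos (by norm_num) (neg_nonpos.2 (Nat.cast_nonneg n))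
      nlinarith [sq_nonneg (s - 1/2)]
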